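/- Let X be a scattered separable metrizable space of Cantor–Bendixson rank ω. Then X is the union of countably many discrete subspaces, but X is not ℓ-discrete for any finite ℓ. -/

import Mathlib

open TopologicalSpace MeasureTheory Topology

/-- A space is *homogeneous* if its homeomorphism group acts transitively. -/
def HomogeneousSpace (X : Type*) [TopologicalSpace X] : Prop :=
  ∀ x y : X, ∃ h : X ≃ₜ X, h x = y

/-- A subset is a *homogeneous subspace* if it is homogeneous in the subspace topology. -/
def HomogeneousSubspace {X : Type*} [TopologicalSpace X] (S : Set X) : Prop :=
  ∀ x y : S, ∃ h : ↥S ≃ₜ ↥S, h x = y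

/-- A space is *zero-dimensional* if the clopen sets form a base. -/
def ZeroDimensionalSpace (X : Type*) [TopologicalSpace X] : Prop :=
  IsTopologicalBasis {s : Set X | IsClopen s}

/-- A space is *analytic* if it embeds onto an analytic subset of some Polish space. -/
def AnalyticSpace (X : Type*) [tX : TopologicalSpace X] : Prop :=
  ∃ (Z : Type) (tZ : TopologicalSpace Z), @PolishSpace Z tZ ∧
    ∃ j : X → Z, @IsEmbedding X Z tX tZ j ∧ @AnalyticSet Z tZ (Set.range j)

/-- A space is *coanalytic* if it embeds onto the complement of an analytic subset of some
Polish space. -/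
def CoanalyticSpace (X : Type*) [tX : TopologicalSpace X] : Prop :=
  ∃ (Z : Type) (tZ : TopologicalSpace Z), @PolishSpace Z tZ ∧
    ∃ j : X → Z, @IsEmbedding X Z tX tZ j ∧ @AnalyticSet Z tZ (Set.range j)ᶜ

/-- A space is *Borel* if it embeds onto a Borel subset of some Polish space. -/
def BorelSpacePaper (X : Type*) [tX : TopologicalSpace X] : Prop :=
  ∃ (Z : Type) (tZ : TopologicalSpace Z), @PolishSpace Z tZ ∧
    ∃ j : X → Z, @IsEmbedding X Z tX tZ j ∧ @MeasurableSet Z (@borel Z tZ) (Set.range j)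

/-- `A ∈ Σ¹₁(X)`: for some embedding `j` of `X` into a Polish space `Z`, `j '' A` is the
trace on `j '' X` of an analytic subset of `Z`. -/
def RelativelyAnalytic {X : Type*} [tX : TopologicalSpace X] (A : Set X) : Prop :=
  ∃ (Z : Type) (tZ : TopologicalSpace Z), @PolishSpace Z tZ ∧
    ∃ j : X → Z, @IsEmbedding X Z tX tZ j ∧
      ∃ A' : Set Z, @AnalyticSet Z tZ A' ∧ j '' A = A' ∩ Set.range j

/-- A subset of a space is `Σ¹₂` if it is a continuous image of a coanalytic subset of a
Polish space. -/
def Sigma12Set {Z : Type*} [tZ : TopologicalSpace Z] (s : Set Z) : Prop :=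
  ∃ (W : Type) (tW : TopologicalSpace W), @PolishSpace W tW ∧
    ∃ (C : Set W) (f : W → Z), @AnalyticSet W tW Cᶜ ∧ @ContinuousOn W Z tW tZ f C ∧ f '' C = s

/-- `A ∈ Δ¹₂(X)`: for some embedding `j` of `X` into a Polish space `Z`, both `j '' A` and
`j '' Aᶜ` are traces on `j '' X` of `Σ¹₂` subsets of `Z`. -/
def RelativelyDelta12 {X : Type*} [tX : TopologicalSpace X] (A : Set X) : Prop :=
  ∃ (Z : Type) (tZ : TopologicalSpace Z), @PolishSpace Z tZ ∧
    ∃ j : X → Z, @IsEmbedding X Z tX tZ j ∧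
      (∃ A' : Set Z, @Sigma12Set Z tZ A' ∧ j '' A = A' ∩ Set.range j) ∧
      (∃ B' : Set Z, @Sigma12Set Z tZ B' ∧ j '' Aᶜ = B' ∩ Set.range j)

/-- A space is *meager* if it is a meager subset of itself. -/
def MeagerSpace (X : Type*) [TopologicalSpace X] : Prop :=
  IsMeagre (Set.univ : Set X)

/-- A space is *Baire* if no non-empty open subset of it is meager (the definition used in
the paper). -/
def PaperBaireSpace (X : Type*) [TopologicalSpace X] : Prop :=
  ∀ U : Set X, IsOpen U → U.Nonempty → ¬ IsMeagre U

/-- A space is *nowhere countable* if it is non-empty and no non-empty open subset of it is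
countable. -/
def NowhereCountable (X : Type*) [TopologicalSpace X] : Prop :=
  Nonempty X ∧ ∀ U : Set X, IsOpen U → U.Nonempty → ¬ U.Countable

/-- The iterated Cantor–Bendixson derivative of a space: `cbDeriv X 0 = X`,
`cbDeriv X (ξ+1)` is `cbDeriv X ξ` minus its isolated points, and intersections are taken
at limit stages. -/
noncomputable def cbDeriv (X : Type*) [TopologicalSpace X] (o : Ordinal.{0}) : Set X :=
  Ordinal.limitRecOn o Set.univ
    (fun _ ih => {x ∈ ih | x ∈ closure (ih \ {x})})
    (fun o _ ih => ⋂ (p : Set.Iio o), ih p.1 p.2)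

/-- A space is *scattered* if some iterated Cantor–Bendixson derivative of it is empty. -/
def ScatteredSpace (X : Type*) [TopologicalSpace X] : Prop :=
  ∃ o : Ordinal.{0}, cbDeriv X o = ∅

/-- A space is *n-discrete* if it is the union of `n` discrete subspaces. -/
def NDiscrete (n : ℕ) (X : Type*) [TopologicalSpace X] : Prop :=
  ∃ D : Fin n → Set X, (∀ k, DiscreteTopology ↥(D k)) ∧ ⋃ k, D k = Set.univ

/-- A space is *n-homogeneous* if it is the union of `n` homogeneous subspaces. -/
def NHomogeneous (n : ℕ) (X : Type*) [TopologicalSpace X] : Prop :=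
  ∃ Y : Fin n → Set X, (∀ k, HomogeneousSubspace (Y k)) ∧ ⋃ k, Y k = Set.univ

/-- A space is *σ-homogeneous* if it is the union of countably many homogeneous
subspaces. -/
def SigmaHomogeneous (X : Type*) [TopologicalSpace X] : Prop :=
  ∃ Y : ℕ → Set X, (∀ n, HomogeneousSubspace (Y n)) ∧ ⋃ n, Y n = Set.univ

/-- An `Fσ` subset: a countable union of closed sets. -/
def IsFsigma {X : Type*} [TopologicalSpace X] (s : Set X) : Prop :=
  ∃ F : ℕ → Set X, (∀ n, IsClosed (F n)) ∧ s = ⋃ n, F n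

section Aux

variable {X : Type*} [TopologicalSpace X]

lemma cbDeriv_zero : cbDeriv X 0 = Set.univ := by
  unfold cbDeriv; rw [Ordinal.limitRecOn_zero]

lemma cbDeriv_succ (o : Ordinal.{0}) :
    cbDeriv X (o + 1) = {x ∈ cbDeriv X o | x ∈ closure (cbDeriv X o \ {x})} := by
  unfold cbDeriv
  rw [show o + 1 = Order.succ o from rfl, Ordinal.limitRecOn_succ]

lemma cbDeriv_omega :
    cbDeriv X Ordinal.omega0 = ⋂ (p : Set.Iio Ordinal.omega0), cbDeriv X p.1 := by
  unfold cbDeriv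
  rw [Ordinal.limitRecOn_limit _ _ _ _ Ordinal.isSuccLimit_omega0]

lemma discrete_iff_closure {S : Set X} :
    DiscreteTopology ↥S ↔ ∀ x ∈ S, x ∉ closure (S \ {x}) := by
  rw [discreteTopology_subtype_iff]
  refine forall₂_congr fun x hx => ?_
  have h : 𝓝[≠] x ⊓ Filter.principal S = 𝓝[S \ {x}] x := by
    rw [show S \ {x} = {x}ᶜ ∩ S by rw [Set.inter_comm, ← Set.diff_eq],
      nhdsWithin_inter']
  rw [h, ← Filter.not_neBot, not_iff_not]
  exact mem_closure_iff_nhdsWithin_neBot.symm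

lemma cbDeriv_key [T1Space X] {ℓ : ℕ} (D : Fin ℓ → Set X)
    (hD : ∀ i, ∀ x ∈ D i, x ∉ closure (D i \ {x})) (hcov : ⋃ i, D i = Set.univ) :
    ∀ k : ℕ, ∀ S : Finset (Fin ℓ), ∀ x ∈ cbDeriv X k, ∀ U : Set X, IsOpen U → x ∈ U →
      (∀ i ∈ S, U ∩ D i = ∅) → S.card + k ≤ ℓ := by
  intro k
  induction k with
  | zero =>
    intro S x _ U _ hxU hS
    have hx : x ∈ ⋃ i, D i := hcov ▸ Set.mem_univ x
    obtain ⟨i, hi⟩ := Set.mem_iUnion.1 hx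
    have hiS : i ∉ S := fun h => Set.eq_empty_iff_forall_notMem.1 (hS i h) x ⟨hxU, hi⟩
    have : (insert i S).card ≤ Fintype.card (Fin ℓ) := Finset.card_le_univ _
    rw [Finset.card_insert_of_notMem hiS, Fintype.card_fin] at this
    omega
  | succ k ih =>
    intro S x hx U hU hxU hS
    rw [show ((k + 1 : ℕ) : Ordinal) = (k : Ordinal) + 1 by push_cast; ring,
      cbDeriv_succ] at hx
    obtain ⟨hxk, hxcl⟩ := hx
    have hxU2 : x ∈ ⋃ i, D i := hcov ▸ Set.mem_univ x
    obtain ⟨i, hi⟩ := Set.mem_iUnion.1 hxU2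
    have hiS : i ∉ S := fun h => Set.eq_empty_iff_forall_notMem.1 (hS i h) x ⟨hxU, hi⟩
    -- get open V isolating x in D i
    have := hD i x hi
    rw [mem_closure_iff] at this
    push_neg at this
    obtain ⟨V, hVopen, hxV, hV⟩ := this
    -- find y ∈ cbDeriv X k near x, y ≠ x
    rw [mem_closure_iff] at hxcl
    obtain ⟨y, hyUV, hyk, hyx⟩ := hxcl (U ∩ V) (hU.inter hVopen) ⟨hxU, hxV⟩
    set U' : Set X := (U ∩ V) ∩ {x}ᶜ with hU'def
    have hU'open : IsOpen U' := (hU.inter hVopen).inter isOpen_compl_singleton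
    have hyU' : y ∈ U' := ⟨hyUV, hyx⟩
    have hins : ∀ j ∈ insert i S, U' ∩ D j = ∅ := by
      intro j hj
      rcases Finset.mem_insert.1 hj with rfl | hj
      · apply Set.eq_empty_iff_forall_notMem.2
        rintro z ⟨⟨⟨_, hzV⟩, hzx⟩, hzD⟩
        exact Set.eq_empty_iff_forall_notMem.1 hV z ⟨hzV, hzD, hzx⟩
      · apply Set.eq_empty_iff_forall_notMem.2
        rintro z ⟨⟨⟨hzU, _⟩, _⟩, hzD⟩
        exact Set.eq_empty_iff_forall_notMem.1 (hS j hj) z ⟨hzU, hzD⟩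
    have := ih (insert i S) y hyk U' hU'open hyU' hins
    rw [Finset.card_insert_of_notMem hiS] at this
    omega

end Aux

/-- A scattered space of Cantor–Bendixson rank exactly `ω` is a countable union of discrete
subspaces, but is not `ℓ`-discrete for any finite `ℓ`. -/
theorem scattered_rank_omega_discrete
    (X : Type) [TopologicalSpace X] [MetrizableSpace X] [SeparableSpace X]
    (h1 : cbDeriv X Ordinal.omega0 = ∅)
    (h2 : ∀ ξ : Ordinal, ξ < Ordinal.omega0 → cbDeriv X ξ ≠ ∅) :
    (∃ D : ℕ → Set X, (∀ k, DiscreteTopology ↥(D k)) ∧ ⋃ k, D k = Set.univ) ∧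
    ∀ ℓ : ℕ, ¬ NDiscrete ℓ X := by
  have _ : T1Space X := by
    letI := TopologicalSpace.metrizableSpaceMetric X
    infer_instance
  -- Part 1: the levels
  have hlevel : ∀ n : ℕ, ∀ x, x ∈ cbDeriv X (n : Ordinal) → x ∉ cbDeriv X ((n : Ordinal) + 1) →
      x ∉ closure (cbDeriv X (n : Ordinal) \ {x}) := by
    intro n x hx hx'
    rw [cbDeriv_succ] at hx'
    exact fun h => hx' ⟨hx, h⟩
  refine ⟨⟨fun n => cbDeriv X (n : Ordinal) \ cbDeriv X ((n : Ordinal) + 1), ?_, ?_⟩, ?_⟩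
  · intro n
    rw [discrete_iff_closure]
    rintro x ⟨hx1, hx2⟩ hcl
    exact hlevel n x hx1 hx2 <|
      closure_mono (Set.diff_subset_diff_left Set.diff_subset) hcl
  · apply Set.eq_univ_of_forall
    intro x
    have hx : x ∉ cbDeriv X Ordinal.omega0 := h1 ▸ Set.notMem_empty x
    rw [cbDeriv_omega, Set.mem_iInter] at hx
    push_neg at hx
    obtain ⟨⟨ξ, hξ⟩, hxξ⟩ := hx
    obtain ⟨n, rfl⟩ := Ordinal.lt_omega0.1 hξ
    have hxn : x ∉ cbDeriv X (n : Ordinal) := hxξ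
    clear hξ hxξ
    induction n with
    | zero => exact absurd (by rw [Nat.cast_zero, cbDeriv_zero]; trivial) hxn
    | succ n ih =>
      by_cases hxn' : x ∈ cbDeriv X (n : Ordinal)
      · refine Set.mem_iUnion.2 ⟨n, hxn', ?_⟩
        rwa [show (n : Ordinal) + 1 = ((n + 1 : ℕ) : Ordinal) by push_cast; ring]
      · exact ih hxn'
  -- Part 2
  rintro ℓ ⟨D, hdisc, hcov⟩
  have hD : ∀ i, ∀ x ∈ D i, x ∉ closure (D i \ {x}) :=
    fun i => discrete_iff_closure.1 (hdisc i)
  obtain ⟨x, hx⟩ := Set.nonempty_iff_ne_empty.2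
    (h2 ((ℓ + 1 : ℕ) : Ordinal) (Ordinal.nat_lt_omega0 _))
  have := cbDeriv_key D hD hcov (ℓ + 1) ∅ x hx Set.univ isOpen_univ trivial
    (by simp)
  simp at this
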